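/- A claw-induced-saturated graph has no vertex of degree one. -/
import Mathlib


open SimpleGraph

/-- `G` contains an induced copy of `H`. -/
def HasInducedCopy {W V : Type*} (H : SimpleGraph W) (G : SimpleGraph V) : Prop :=
  Nonempty (H ↪g G)

/-- `G` is `H`-induced-saturated: `G` has no induced copy of `H`, but deleting any edge
or adding any non-edge creates an induced copy of `H`. -/
def IsIndSat {V W : Type*} (G : SimpleGraph V) (H : SimpleGraph W) : Prop :=
  ¬ HasInducedCopy H G ∧
  (∀ u v : V, G.Adj u v → HasInducedCopy H (G.deleteEdges {s(u, v)})) ∧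
  (∀ u v : V, u ≠ v → ¬ G.Adj u v →
    HasInducedCopy H (G ⊔ SimpleGraph.fromEdgeSet {s(u, v)}))

/-- The claw `K_{1,3}`: star with center `0` and leaves `1, 2, 3`. -/
def claw : SimpleGraph (Fin 4) :=
  SimpleGraph.fromRel (fun i _ => i = 0)

/-- A claw-induced-saturated graph has no vertex of degree one. -/
theorem claw_indSat_no_degree_one {V : Type*} [Fintype V] (G : SimpleGraph V)
    [DecidableRel G.Adj] (h : IsIndSat G claw) :
    ∀ v : V, G.degree v ≠ 1 := by
  intro v hdeg
  rw [SimpleGraph.degree, Finset.card_eq_one] at hdeg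
  obtain ⟨u, hu⟩ := hdeg
  have hadjvu : G.Adj v u := by
    rw [← SimpleGraph.mem_neighborFinset, hu]; exact Finset.mem_singleton_self u
  have huniq : ∀ w, G.Adj v w → w = u := by
    intro w hw
    have : w ∈ G.neighborFinset v := (SimpleGraph.mem_neighborFinset _ _ _).2 hw
    rw [hu] at this
    exact Finset.mem_singleton.1 this
  obtain ⟨f⟩ := h.2.1 u v hadjvu.symm
  -- f : claw ↪g G.deleteEdges {s(u,v)}
  by_cases hiff : ∀ i j, G.Adj (f i) (f j) ↔ claw.Adj i j
  · exact h.1 ⟨⟨f.toEmbedding, fun {a b} => hiff a b⟩⟩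
  · push_neg at hiff
    obtain ⟨i, j, hij⟩ := hiff
    have hdir : claw.Adj i j → G.Adj (f i) (f j) := by
      intro hc
      exact (SimpleGraph.deleteEdges_adj.1 (f.map_adj_iff.2 hc)).1
    obtain ⟨hGadj, hnclaw⟩ : G.Adj (f i) (f j) ∧ ¬ claw.Adj i j := by
      rcases hij with h' | h'
      · exact h'
      · exact absurd (hdir h'.2) h'.1
    have hndel : ¬ (G.deleteEdges {s(u,v)}).Adj (f i) (f j) := fun hd =>
      hnclaw (f.map_adj_iff.1 hd)
    have hedge : s(f i, f j) = s(u, v) := by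
      rw [SimpleGraph.deleteEdges_adj] at hndel
      push_neg at hndel
      have := hndel hGadj
      simpa using this
    have hinej : i ≠ j := fun he => hGadj.ne (by rw [he])
    -- i, j ≠ 0
    have hi0 : i ≠ 0 := fun hi => hnclaw ⟨hinej, Or.inl hi⟩
    have hj0 : j ≠ 0 := fun hj => hnclaw ⟨hinej, Or.inr hj⟩
    -- center f 0 adjacent to f i and f j in deleted graph
    have hci : (G.deleteEdges {s(u,v)}).Adj (f 0) (f i) :=
      f.map_adj_iff.2 ⟨fun he => hi0 he.symm, Or.inl rfl⟩
    have hcj : (G.deleteEdges {s(u,v)}).Adj (f 0) (f j) :=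
      f.map_adj_iff.2 ⟨fun he => hj0 he.symm, Or.inl rfl⟩
    rw [SimpleGraph.deleteEdges_adj] at hci hcj
    -- s(f i, f j) = s(u,v): two cases
    rcases Sym2.eq_iff.1 hedge with ⟨hfi, hfj⟩ | ⟨hfi, hfj⟩
    · -- f i = u, f j = v : f 0 adjacent to v, so f 0 = u, but edge s(f0, f j)=s(u,v) removed
      have h0 : f 0 = u := huniq _ (by have := hcj.1.symm; rw [hfj] at this; exact this)
      exact hcj.2 (by simp [Set.mem_singleton_iff, h0, hfj])
    · -- f i = v, f j = u
      have h0 : f 0 = u := huniq _ (by have := hci.1.symm; rw [hfi] at this; exact this)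
      exact hci.2 (by simp [Set.mem_singleton_iff, h0, hfi])
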